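/- Let y = (y₁, y₂, y₃) ∈ ℝ³ satisfy y₃ > 0 and y₃² > y₁² + y₂². Set q₁(t, y) = (y₃ − t)² − (y₂ − t)² − y₁² and R(y) = {t ∈ ℝ : 0 < t < y₃ and q₁(t, y) > 0}. Then ∫_{R(y)} dt / (2π·√(q₁(t, y))) = √(y₃² − y₁² − y₂²) / (2π·(y₃ − y₂)). (Note that y₃ − y₂ > 0 under the hypotheses.) -/
import Mathlib


open MeasureTheory Real

/-- The Riesz measure in the tangent case `a = 1`: at a point `y` in the open dual of the
ice-cream cone,
`∫_{R(y)} dt / (2π√(q₁(t,y))) = √(y₃² − y₁² − y₂²) / (2π (y₃ − y₂))`,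
where `q₁(t,y) = (y₃ − t)² − (y₂ − t)² − y₁²` and `R(y) = {t : 0 < t < y₃, q₁(t,y) > 0}`. -/
theorem tangent_line_measure (y₁ y₂ y₃ : ℝ) (hy3 : 0 < y₃)
    (hy : y₁ ^ 2 + y₂ ^ 2 < y₃ ^ 2) :
    ∫ t in {t : ℝ | 0 < t ∧ t < y₃ ∧
        0 < (y₃ - t) ^ 2 - (y₂ - t) ^ 2 - y₁ ^ 2},
        (2 * π * Real.sqrt ((y₃ - t) ^ 2 - (y₂ - t) ^ 2 - y₁ ^ 2))⁻¹
      = Real.sqrt (y₃ ^ 2 - y₁ ^ 2 - y₂ ^ 2) / (2 * π * (y₃ - y₂)) := by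
  have hc : 0 < y₃ - y₂ := by nlinarith [sq_nonneg y₁, sq_nonneg (y₃ + y₂)]
  have hA : 0 < y₃ ^ 2 - y₂ ^ 2 - y₁ ^ 2 := by nlinarith
  set A := y₃ ^ 2 - y₂ ^ 2 - y₁ ^ 2 with hAdef
  set c := y₃ - y₂ with hcdef
  set t₀ := A / (2 * c) with ht₀def
  have ht₀pos : 0 < t₀ := by positivity
  have hq : ∀ t : ℝ, (y₃ - t) ^ 2 - (y₂ - t) ^ 2 - y₁ ^ 2 = A - 2 * c * t := by
    intro t; rw [hAdef, hcdef]; ring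
  have hset : {t : ℝ | 0 < t ∧ t < y₃ ∧ 0 < (y₃ - t) ^ 2 - (y₂ - t) ^ 2 - y₁ ^ 2}
      = Set.Ioo 0 t₀ := by
    ext t
    simp only [Set.mem_setOf_eq, Set.mem_Ioo, hq]
    constructor
    · rintro ⟨h1, _, h3⟩
      exact ⟨h1, by rw [ht₀def, lt_div_iff₀ (by positivity)]; linarith⟩
    · rintro ⟨h1, h2⟩
      rw [ht₀def, lt_div_iff₀ (by positivity)] at h2
      constructor
      · exact h1
      constructor
      · nlinarith [sq_nonneg y₁, sq_nonneg (y₃ - y₂)]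
      · linarith
  rw [hset, ← MeasureTheory.integral_Ioc_eq_integral_Ioo,
    ← intervalIntegral.integral_of_le ht₀pos.le]
  have hcongr : ∫ t in (0:ℝ)..t₀,
        (2 * π * Real.sqrt ((y₃ - t) ^ 2 - (y₂ - t) ^ 2 - y₁ ^ 2))⁻¹
      = ∫ t in (0:ℝ)..t₀, (2 * π)⁻¹ * ((A - 2 * c * t) ^ (-(1/2) : ℝ)) := by
    apply intervalIntegral.integral_congr
    intro t ht
    rw [Set.uIcc_of_le ht₀pos.le, Set.mem_Icc] at ht
    have hu : 0 ≤ A - 2 * c * t := by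
      have h2 := ht.2
      rw [ht₀def, le_div_iff₀ (by positivity)] at h2
      linarith
    simp only [hq]
    rw [Real.sqrt_eq_rpow, mul_inv, Real.rpow_neg hu]
  rw [hcongr, intervalIntegral.integral_const_mul]
  have h2c : (2 * c) ≠ 0 := by positivity
  have hkey : (∫ t in (0:ℝ)..t₀, (A - 2 * c * t) ^ (-(1/2) : ℝ))
      = (2 * c)⁻¹ • ∫ u in (0:ℝ)..A, u ^ (-(1/2) : ℝ) := by
    have := intervalIntegral.integral_comp_mul_left
      (fun x : ℝ => (A - x) ^ (-(1/2) : ℝ)) h2c (a := 0) (b := t₀)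
    rw [this, mul_zero]
    have ht : 2 * c * t₀ = A := by
      rw [ht₀def]; field_simp
    rw [ht, intervalIntegral.integral_comp_sub_left (fun u : ℝ => u ^ (-(1/2) : ℝ)) A,
      sub_self, sub_zero]
  rw [hkey, integral_rpow (by norm_num)]
  have : (-(1/2) : ℝ) + 1 = 1/2 := by norm_num
  rw [this, Real.zero_rpow (by norm_num), ← Real.sqrt_eq_rpow]
  have hAeq : y₃ ^ 2 - y₁ ^ 2 - y₂ ^ 2 = A := by rw [hAdef]; ring
  rw [hAeq]
  have hπ : (0:ℝ) < π := Real.pi_pos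
  rw [smul_eq_mul]
  field_simp
  ring
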